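/- The optimal value function u satisfies u(t) ~ √(2t) as t → ∞, i.e. lim_{t→∞} u(t)/√(2t) = 1. -/

import Mathlib

/-- The operator `J` from the paper: `(Jf)(t) = ∫₀¹ (f(t(1−x)) + 1 − f(t))⁺ dx`. -/
noncomputable def Jop (f : ℝ → ℝ) (t : ℝ) : ℝ :=
  ∫ x in (0 : ℝ)..1, max (f (t * (1 - x)) + 1 - f t) 0

open Set Filter Real Topology intervalIntegral

section Helpers

lemma sqrt_aux1 {x : ℝ} (hx0 : 0 ≤ x) (hx1 : x ≤ 1) :
    Real.sqrt (1 - x) ≤ 1 - x/2 - x^2/8 := by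
  have h1 : (0:ℝ) ≤ 1 - x/2 - x^2/8 := by nlinarith
  have h2 : 1 - x ≤ (1 - x/2 - x^2/8)^2 := by nlinarith
  calc Real.sqrt (1-x) ≤ Real.sqrt ((1 - x/2 - x^2/8)^2) := Real.sqrt_le_sqrt h2
    _ = 1 - x/2 - x^2/8 := Real.sqrt_sq h1

lemma sqrt_aux2 {x : ℝ} (hx0 : 0 ≤ x) (hx1 : x ≤ 1) :
    Real.sqrt (1 - x) ≤ 1 - x/2 := le_trans (sqrt_aux1 hx0 hx1) (by nlinarith)

lemma sqrt_aux3 {x : ℝ} (hx0 : 0 ≤ x) (hx1 : x ≤ 1) :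
    1 - x/2 - x^2/2 ≤ Real.sqrt (1 - x) := by
  rcases le_or_gt (1 - x/2 - x^2/2) 0 with h | h
  · exact h.trans (Real.sqrt_nonneg _)
  · have hs := Real.sq_sqrt (by linarith : (0:ℝ) ≤ 1 - x)
    have hn := Real.sqrt_nonneg (1 - x)
    nlinarith [sq_nonneg (Real.sqrt (1-x) - (1 - x/2 - x^2/2)),
      sq_nonneg (Real.sqrt (1-x) + (1 - x/2 - x^2/2))]

lemma poly_int1 (r a b : ℝ) :
    ∫ x in a..b, (1 - r*x/2 - r*x^2/8) =
      (b - r*b^2/4 - r*b^3/24) - (a - r*a^2/4 - r*a^3/24) := by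
  apply intervalIntegral.integral_eq_sub_of_hasDerivAt
  · intro x _
    have h := ((hasDerivAt_id x).sub (((hasDerivAt_pow 2 x)).const_mul (r/4))).sub
      ((hasDerivAt_pow 3 x).const_mul (r/24))
    convert h using 1
    · ext y; simp [id]; ring
    · push_cast; ring
  · exact (Continuous.intervalIntegrable (by continuity) _ _)

lemma poly_int2 (r a b : ℝ) :
    ∫ x in a..b, (1 - r*x/2) = (b - r*b^2/4) - (a - r*a^2/4) := by
  apply intervalIntegral.integral_eq_sub_of_hasDerivAt
  · intro x _
    have h := (hasDerivAt_id x).sub (((hasDerivAt_pow 2 x)).const_mul (r/4))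
    convert h using 1
    · ext y; simp [id]; ring
    · push_cast; ring
  · exact (Continuous.intervalIntegrable (by continuity) _ _)

lemma poly_int3 (r a b : ℝ) :
    ∫ x in a..b, (1 - r*x/2 - r*x^2/2) =
      (b - r*b^2/4 - r*b^3/6) - (a - r*a^2/4 - r*a^3/6) := by
  apply intervalIntegral.integral_eq_sub_of_hasDerivAt
  · intro x _
    have h := ((hasDerivAt_id x).sub (((hasDerivAt_pow 2 x)).const_mul (r/4))).sub
      ((hasDerivAt_pow 3 x).const_mul (r/6))
    convert h using 1
    · ext y; simp [id]; ring
    · push_cast; ring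
  · exact (Continuous.intervalIntegrable (by continuity) _ _)

lemma ar1 {r : ℝ} (h : r ≠ 0) :
    (1/r - r*(1/r)^2/4 - r*(1/r)^3/24) - (0 - r*0^2/4 - r*0^3/24) = 3/(4*r) - 1/(24*r^2) := by
  field_simp; ring

lemma ar2 {r : ℝ} (h : r ≠ 0) :
    ((2/r) - r*(2/r)^2/4) - ((1/r) - r*(1/r)^2/4) = 1/(4*r) := by
  field_simp; ring

lemma ar3 {r : ℝ} (h : r ≠ 0) :
    ((2/r) - r*(2/r)^2/4 - r*(2/r)^3/6) - (0 - r*0^2/4 - r*0^3/6) = 1/r - 4/(3*r^2) := by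
  field_simp; ring

lemma ar4 {r : ℝ} (h : r ≠ 0) : 3/(4*r) - 1/(24*r^2) + 1/(4*r) = 1/r - 1/(24*r^2) := by
  field_simp; ring

lemma Jcalc_upper {r : ℝ} (hr : 2 ≤ r) :
    ∫ x in (0:ℝ)..1, max (r * Real.sqrt (1 - x) + 1 - r) 0 ≤ 1/r - 1/(24*r^2) := by
  have hr0 : (0:ℝ) < r := by linarith
  have hcont : Continuous (fun x : ℝ => max (r * Real.sqrt (1 - x) + 1 - r) 0) := by
    apply Continuous.max _ continuous_const; continuity
  have hcont2 : Continuous (fun x : ℝ => max (1 - r*x/2) 0) := by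
    apply Continuous.max _ continuous_const; continuity
  have h1r : (0:ℝ) ≤ 1/r := by positivity
  have h1r2 : (1:ℝ)/r ≤ 2/r := by gcongr <;> norm_num
  have h2r1 : (2:ℝ)/r ≤ 1 := by rw [div_le_one hr0]; linarith
  have h1r1 : (1:ℝ)/r ≤ 1 := le_trans h1r2 h2r1
  have hsplit : ∫ x in (0:ℝ)..1, max (r * Real.sqrt (1 - x) + 1 - r) 0
      = (∫ x in (0:ℝ)..(1/r), max (r * Real.sqrt (1 - x) + 1 - r) 0)
        + ∫ x in (1/r)..1, max (r * Real.sqrt (1 - x) + 1 - r) 0 :=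
    (integral_add_adjacent_intervals (hcont.intervalIntegrable _ _)
      (hcont.intervalIntegrable _ _)).symm
  have hA : (∫ x in (0:ℝ)..(1/r), max (r * Real.sqrt (1 - x) + 1 - r) 0)
      ≤ ∫ x in (0:ℝ)..(1/r), (1 - r*x/2 - r*x^2/8) := by
    apply intervalIntegral.integral_mono_on h1r (hcont.intervalIntegrable _ _)
      (Continuous.intervalIntegrable (by continuity) _ _)
    intro x hx
    obtain ⟨hx0, hxr⟩ := hx
    have hx1 : x ≤ 1 := le_trans hxr h1r1
    have hrx : r * x ≤ 1 := by rw [← le_div_iff₀' hr0]; exact hxr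
    have hpos : (0:ℝ) ≤ 1 - r*x/2 - r*x^2/8 := by nlinarith
    apply max_le _ hpos
    have h := sqrt_aux1 hx0 hx1
    nlinarith [h]
  have hB : (∫ x in (1/r)..1, max (r * Real.sqrt (1 - x) + 1 - r) 0)
      ≤ ∫ x in (1/r)..1, max (1 - r*x/2) 0 := by
    apply intervalIntegral.integral_mono_on h1r1 (hcont.intervalIntegrable _ _)
      (hcont2.intervalIntegrable _ _)
    intro x hx
    apply max_le_max _ le_rfl
    have h := sqrt_aux2 (le_trans h1r hx.1) hx.2
    nlinarith [h]
  have hB2 : (∫ x in (1/r)..1, max (1 - r*x/2) 0) = 1/(4*r) := by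
    have e1 : (∫ x in (1/r)..(2/r), max (1 - r*x/2) 0) = ∫ x in (1/r)..(2/r), (1 - r*x/2) := by
      apply intervalIntegral.integral_congr
      intro x hx
      rw [uIcc_of_le h1r2] at hx
      have : r * x ≤ 2 := by rw [← le_div_iff₀' hr0]; exact hx.2
      simp only [max_eq_left_iff]
      linarith
    have e2 : (∫ x in (2/r)..1, max (1 - r*x/2) 0) = ∫ x in (2/r)..(1:ℝ), (0:ℝ) := by
      apply intervalIntegral.integral_congr
      intro x hx
      rw [uIcc_of_le h2r1] at hx
      have : 2 ≤ r * x := by rw [← div_le_iff₀' hr0]; exact hx.1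
      simp only [max_eq_right_iff]
      linarith
    have hsplit2 : (∫ x in (1/r)..1, max (1 - r*x/2) 0)
        = (∫ x in (1/r)..(2/r), max (1 - r*x/2) 0) + ∫ x in (2/r)..1, max (1 - r*x/2) 0 :=
      (integral_add_adjacent_intervals (hcont2.intervalIntegrable _ _)
        (hcont2.intervalIntegrable _ _)).symm
    rw [hsplit2, e1, e2, poly_int2, intervalIntegral.integral_zero, add_zero]
    exact ar2 hr0.ne'
  have hAval : (∫ x in (0:ℝ)..(1/r), (1 - r*x/2 - r*x^2/8)) = 3/(4*r) - 1/(24*r^2) := by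
    rw [poly_int1]; exact ar1 hr0.ne'
  rw [hsplit]
  have := hA.trans_eq hAval
  have := hB.trans_eq hB2
  have hfin := ar4 hr0.ne'
  linarith

lemma Jcalc_lower {r : ℝ} (hr : 2 ≤ r) :
    1/r - 4/(3*r^2) ≤ ∫ x in (0:ℝ)..1, max (r * Real.sqrt (1 - x) + 1 - r) 0 := by
  have hr0 : (0:ℝ) < r := by linarith
  have hcont : Continuous (fun x : ℝ => max (r * Real.sqrt (1 - x) + 1 - r) 0) := by
    apply Continuous.max _ continuous_const; continuity
  have h2r0 : (0:ℝ) ≤ 2/r := by positivity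
  have h2r1 : (2:ℝ)/r ≤ 1 := by rw [div_le_one hr0]; linarith
  have hsplit : ∫ x in (0:ℝ)..1, max (r * Real.sqrt (1 - x) + 1 - r) 0
      = (∫ x in (0:ℝ)..(2/r), max (r * Real.sqrt (1 - x) + 1 - r) 0)
        + ∫ x in (2/r)..1, max (r * Real.sqrt (1 - x) + 1 - r) 0 :=
    (integral_add_adjacent_intervals (hcont.intervalIntegrable _ _)
      (hcont.intervalIntegrable _ _)).symm
  have hpos2 : (0:ℝ) ≤ ∫ x in (2/r)..1, max (r * Real.sqrt (1 - x) + 1 - r) 0 :=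
    intervalIntegral.integral_nonneg h2r1 (fun x _ => le_max_right _ _)
  have hA : (∫ x in (0:ℝ)..(2/r), (1 - r*x/2 - r*x^2/2))
      ≤ ∫ x in (0:ℝ)..(2/r), max (r * Real.sqrt (1 - x) + 1 - r) 0 := by
    apply intervalIntegral.integral_mono_on h2r0
      (Continuous.intervalIntegrable (by continuity) _ _) (hcont.intervalIntegrable _ _)
    intro x hx
    have hx1 : x ≤ 1 := le_trans hx.2 h2r1
    have h := sqrt_aux3 hx.1 hx1
    have : 1 - r*x/2 - r*x^2/2 ≤ r * Real.sqrt (1 - x) + 1 - r := by nlinarith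
    exact this.trans (le_max_left _ _)
  have hAval : (∫ x in (0:ℝ)..(2/r), (1 - r*x/2 - r*x^2/2)) = 1/r - 4/(3*r^2) := by
    rw [poly_int3]; exact ar3 hr0.ne'
  rw [hsplit]
  linarith [hAval ▸ hA]

lemma Jop_cont_integrand {f : ℝ → ℝ} {t : ℝ} (ht : 0 ≤ t) (hf : ContinuousOn f (Icc 0 t)) :
    IntervalIntegrable (fun x => max (f (t * (1 - x)) + 1 - f t) 0) MeasureTheory.volume 0 1 := by
  have hmap : ∀ x ∈ Icc (0:ℝ) 1, t*(1-x) ∈ Icc 0 t := by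
    intro x hx
    constructor
    · nlinarith [hx.1, hx.2]
    · nlinarith [hx.1]
  have hm : Continuous fun x : ℝ => t*(1-x) := by continuity
  have h1 : ContinuousOn (fun x => f (t*(1-x))) (Icc 0 1) :=
    hf.comp hm.continuousOn hmap
  have h2 : ContinuousOn (fun x => max (f (t*(1-x)) + 1 - f t) 0) (Icc 0 1) :=
    ((h1.add continuousOn_const).sub continuousOn_const).sup continuousOn_const
  apply ContinuousOn.intervalIntegrable
  rwa [uIcc_of_le zero_le_one]

lemma Jop_mono {f g : ℝ → ℝ} {t : ℝ} (ht : 0 ≤ t)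
    (hf : ContinuousOn f (Icc 0 t)) (hg : ContinuousOn g (Icc 0 t))
    (hle : ∀ s ∈ Icc 0 t, f s ≤ g s) (heqt : f t = g t) :
    Jop f t ≤ Jop g t := by
  unfold Jop
  apply intervalIntegral.integral_mono_on zero_le_one (Jop_cont_integrand ht hf)
    (Jop_cont_integrand ht hg)
  intro x hx
  have hmem : t*(1-x) ∈ Icc 0 t := by
    constructor
    · nlinarith [hx.1, hx.2]
    · nlinarith [hx.1]
  have := hle _ hmem
  apply max_le_max _ le_rfl
  rw [heqt]
  linarith

lemma Jop_sqrt (α K t : ℝ) (ht : 0 ≤ t) :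
    Jop (fun s => α * Real.sqrt (2*s) - K) t
      = ∫ x in (0:ℝ)..1,
          max (α * Real.sqrt (2*t) * Real.sqrt (1 - x) + 1 - α * Real.sqrt (2*t)) 0 := by
  unfold Jop
  apply intervalIntegral.integral_congr
  intro x _
  have hs : Real.sqrt (2*(t*(1-x))) = Real.sqrt (2*t) * Real.sqrt (1-x) := by
    rw [show 2*(t*(1-x)) = (2*t)*(1-x) by ring, Real.sqrt_mul (by linarith)]
  simp only
  rw [hs]
  ring_nf

lemma touch {φ : ℝ → ℝ} {φ' t₀ : ℝ} (ht₀ : 1 ≤ t₀)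
    (hd : HasDerivWithinAt φ φ' (Icc 0 t₀) t₀)
    (hmax : ∀ s ∈ Icc 0 t₀, φ s ≤ φ t₀) : 0 ≤ φ' := by
  have hmax' : IsMaxOn φ (Icc 0 t₀) t₀ := fun s hs => hmax s hs
  have hy : ((t₀ - 1) - t₀) ∈ posTangentConeAt (Icc 0 t₀) t₀ := by
    apply sub_mem_posTangentConeAt_of_segment_subset
    rw [segment_symm, segment_eq_Icc (by linarith)]
    exact Icc_subset_Icc (by linarith) le_rfl
  have h := hmax'.localize.hasFDerivWithinAt_nonpos hd.hasFDerivWithinAt hy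
  simp only [ContinuousLinearMap.toSpanSingleton_apply, ContinuousLinearMap.one_apply,
    smul_eq_mul] at h
  nlinarith [h]

lemma sqrtDeriv (α K t : ℝ) (ht : 0 < t) :
    HasDerivAt (fun s => α * Real.sqrt (2*s) - K) (α / Real.sqrt (2*t)) t := by
  have h2t : (2*t) ≠ 0 := by positivity
  have hsp : 0 < Real.sqrt (2*t) := Real.sqrt_pos.mpr (by linarith)
  have h := (Real.hasDerivAt_sqrt h2t).comp t ((hasDerivAt_id t).const_mul 2)
  have h2 := (h.const_mul α).sub_const K
  refine h2.congr_deriv ?_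
  field_simp

end Helpers

set_option maxHeartbeats 2000000 in
/-- The optimal value function `u` (the C¹ solution of `u′ = Ju`, `u(0) = 0`)
satisfies `u(t) ~ √(2t)` as `t → ∞`, i.e. `lim_{t→∞} u(t)/√(2t) = 1`. -/
theorem statement4 (u u' : ℝ → ℝ)
    (hderiv : ∀ t ∈ Set.Ici (0 : ℝ), HasDerivWithinAt u (u' t) (Set.Ici (0 : ℝ)) t)
    (hcont : ContinuousOn u' (Set.Ici (0 : ℝ)))
    (hu0 : u 0 = 0)
    (heq : ∀ t ∈ Set.Ici (0 : ℝ), u' t = Jop u t) :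
    Filter.Tendsto (fun t => u t / Real.sqrt (2 * t)) Filter.atTop (nhds 1) := by
  have ucont : ContinuousOn u (Ici 0) := fun t ht => (hderiv t ht).continuousWithinAt
  have hJnn : ∀ t, 0 ≤ t → 0 ≤ u' t := by
    intro t ht
    rw [heq t ht]
    exact intervalIntegral.integral_nonneg zero_le_one (fun x _ => le_max_right _ _)
  have umono : MonotoneOn u (Ici 0) := by
    apply monotoneOn_of_hasDerivWithinAt_nonneg (convex_Ici 0) ucont (f' := u')
    · intro x hx
      rw [interior_Ici] at hx ⊢
      exact (hderiv x (mem_Ici.mpr hx.le)).mono Ioi_subset_Ici_self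
    · intro x hx
      rw [interior_Ici] at hx
      exact hJnn x hx.le
  have unn : ∀ t, 0 ≤ t → 0 ≤ u t := by
    intro t ht
    have := umono (self_mem_Ici) ht ht
    rwa [hu0] at this
  have hle1 : ∀ t, 0 ≤ t → u' t ≤ 1 := by
    intro t ht
    rw [heq t ht]
    have h1 : Jop u t ≤ Jop (fun _ => u t) t := by
      apply Jop_mono ht (ucont.mono Icc_subset_Ici_self) continuousOn_const _ rfl
      intro s hs
      exact umono hs.1 ht hs.2
    have h2 : Jop (fun _ => u t) t = 1 := by
      unfold Jop
      simp
    linarith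
  have hut : ∀ t, 0 ≤ t → u t ≤ t := by
    have hm2 : MonotoneOn (fun t => t - u t) (Ici 0) := by
      apply monotoneOn_of_hasDerivWithinAt_nonneg (convex_Ici 0)
        (continuousOn_id.sub ucont) (f' := fun t => 1 - u' t)
      · intro x hx
        rw [interior_Ici] at hx ⊢
        exact (hasDerivWithinAt_id x _).sub ((hderiv x (mem_Ici.mpr hx.le)).mono Ioi_subset_Ici_self)
      · intro x hx
        rw [interior_Ici] at hx
        have := hle1 x hx.le
        linarith
    intro t ht
    have := hm2 self_mem_Ici ht ht
    simp only [hu0, sub_zero] at this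
    linarith [this]
  have gcont : Continuous (fun s : ℝ => Real.sqrt (2*s)) := by continuity
  -- Part 1: upper bound u t ≤ √(2t)
  have husq : ∀ t, 0 ≤ t → u t ≤ Real.sqrt (2*t) := by
    by_contra hcon
    push_neg at hcon
    obtain ⟨t₁, ht₁0, ht₁⟩ := hcon
    set S : Set ℝ := {t | 0 ≤ t ∧ Real.sqrt (2*t) < u t} with hSdef
    have hSne : S.Nonempty := ⟨t₁, ht₁0, ht₁⟩
    have hSbd : BddBelow S := ⟨0, fun t ht => ht.1⟩
    set t₀ := sInf S with ht₀def
    have hS2 : ∀ t ∈ S, 2 ≤ t := by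
      intro t ht
      obtain ⟨ht0, htlt⟩ := ht
      have h1 : Real.sqrt (2*t) < t := lt_of_lt_of_le htlt (hut t ht0)
      have h2 : 0 ≤ Real.sqrt (2*t) := Real.sqrt_nonneg _
      have h3 := Real.sq_sqrt (by linarith : (0:ℝ) ≤ 2*t)
      nlinarith
    have ht₀2 : 2 ≤ t₀ := le_csInf hSne hS2
    have ht₀0 : (0:ℝ) ≤ t₀ := by linarith
    have hφcont : ContinuousOn (fun t => u t - Real.sqrt (2*t)) (Ici 0) :=
      ucont.sub gcont.continuousOn
    have hclos : t₀ ∈ closure S := (isGLB_csInf hSne hSbd).mem_closure hSne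
    have hC : IsClosed (Ici 0 ∩ (fun t => u t - Real.sqrt (2*t)) ⁻¹' (Ici 0)) :=
      hφcont.preimage_isClosed_of_isClosed isClosed_Ici isClosed_Ici
    have hSC : S ⊆ Ici 0 ∩ (fun t => u t - Real.sqrt (2*t)) ⁻¹' (Ici 0) := by
      intro t ht
      refine ⟨ht.1, ?_⟩
      simp only [mem_preimage, mem_Ici]
      linarith [ht.2]
    have hge : 0 ≤ u t₀ - Real.sqrt (2*t₀) := ((hC.closure_subset_iff.mpr hSC) hclos).2
    have hlt : ∀ t, 0 ≤ t → t < t₀ → u t ≤ Real.sqrt (2*t) := by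
      intro t h0 hltt
      by_contra hc
      push_neg at hc
      exact absurd (csInf_le hSbd ⟨h0, hc⟩) (not_le.mpr hltt)
    have hle0 : u t₀ - Real.sqrt (2*t₀) ≤ 0 := by
      have hne : (𝓝[Ico 0 t₀] t₀).NeBot := by
        apply mem_closure_iff_nhdsWithin_neBot.mp
        rw [closure_Ico (by linarith : (0:ℝ) ≠ t₀)]
        exact ⟨ht₀0, le_rfl⟩
      have htend : Tendsto (fun t => u t - Real.sqrt (2*t)) (𝓝[Ico 0 t₀] t₀)
          (𝓝 (u t₀ - Real.sqrt (2*t₀))) :=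
        (hφcont t₀ ht₀0).mono (fun x hx => hx.1)
      apply le_of_tendsto htend
      filter_upwards [self_mem_nhdsWithin] with t ht
      linarith [hlt t ht.1 ht.2]
    have hueq : u t₀ = Real.sqrt (2*t₀) := by linarith
    have hIle : ∀ s ∈ Icc (0:ℝ) t₀, u s ≤ Real.sqrt (2*s) := by
      intro s hs
      rcases lt_or_eq_of_le hs.2 with h | h
      · exact hlt s hs.1 h
      · rw [h, hueq]
    set r := Real.sqrt (2*t₀) with hrdef
    have hr2 : 2 ≤ r := by
      rw [show (2:ℝ) = Real.sqrt 4 by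
        rw [show (4:ℝ) = 2^2 by norm_num, Real.sqrt_sq (by norm_num)]]
      exact Real.sqrt_le_sqrt (by linarith)
    have hr0 : (0:ℝ) < r := by linarith
    have hgfun : (fun s : ℝ => Real.sqrt (2*s)) = (fun s : ℝ => 1 * Real.sqrt (2*s) - 0) := by
      funext s; ring
    have hJu : Jop u t₀ ≤ Jop (fun s : ℝ => Real.sqrt (2*s)) t₀ :=
      Jop_mono ht₀0 (ucont.mono Icc_subset_Ici_self) gcont.continuousOn hIle hueq
    have hJg : Jop (fun s : ℝ => Real.sqrt (2*s)) t₀ ≤ 1/r - 1/(24*r^2) := by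
      rw [hgfun, Jop_sqrt 1 0 t₀ ht₀0]
      simp only [one_mul]
      exact Jcalc_upper hr2
    have hgd : HasDerivAt (fun s : ℝ => Real.sqrt (2*s)) (1/r) t₀ := by
      have h := sqrtDeriv 1 0 t₀ (by linarith)
      simp only [one_mul, sub_zero, one_div] at h ⊢
      exact h
    have hd : HasDerivWithinAt (fun t => u t - Real.sqrt (2*t)) (u' t₀ - 1/r) (Icc 0 t₀) t₀ :=
      ((hderiv t₀ ht₀0).mono Icc_subset_Ici_self).sub hgd.hasDerivWithinAt
    have htouch : 0 ≤ u' t₀ - 1/r := by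
      apply touch (by linarith : (1:ℝ) ≤ t₀) hd
      intro s hs
      have := hIle s hs
      rw [hueq]
      simp only [hrdef, sub_self]
      linarith
    have h1 : u' t₀ = Jop u t₀ := heq t₀ ht₀0
    have hq : 0 < 1/(24*r^2) := by positivity
    linarith
  -- Part 2: lower bound
  have hlow : ∀ α : ℝ, 0 < α → α < 1 →
      ∃ K : ℝ, 0 ≤ K ∧ ∀ t, 0 ≤ t → α * Real.sqrt (2*t) - K ≤ u t := by
    intro α hα0 hα1
    have hα2 : 0 < 1 - α^2 := by nlinarith
    set M := max 2 (4/(3*(1-α^2))) + 1 with hMdef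
    have hM3 : 3 ≤ M := by
      have := le_max_left 2 (4/(3*(1-α^2)))
      simp only [hMdef]
      linarith
    have hM4 : 4/(3*(1-α^2)) < M := by
      have := le_max_right 2 (4/(3*(1-α^2)))
      simp only [hMdef]
      linarith
    refine ⟨M, by linarith, ?_⟩
    by_contra hcon
    push_neg at hcon
    obtain ⟨t₁, ht₁0, ht₁⟩ := hcon
    have hhcont : Continuous (fun t : ℝ => α * Real.sqrt (2*t) - M) := by continuity
    set S : Set ℝ := {t | 0 ≤ t ∧ u t < α * Real.sqrt (2*t) - M} with hSdef
    have hSne : S.Nonempty := ⟨t₁, ht₁0, by linarith⟩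
    have hSbd : BddBelow S := ⟨0, fun t ht => ht.1⟩
    set t₀ := sInf S with ht₀def
    have hclos : t₀ ∈ closure S := (isGLB_csInf hSne hSbd).mem_closure hSne
    have hψcont : ContinuousOn
        (fun t => min (α * Real.sqrt (2*t) - M) ((α * Real.sqrt (2*t) - M) - u t)) (Ici 0) :=
      (hhcont.continuousOn).inf ((hhcont.continuousOn).sub ucont)
    have hC : IsClosed (Ici 0 ∩
        (fun t => min (α * Real.sqrt (2*t) - M) ((α * Real.sqrt (2*t) - M) - u t)) ⁻¹'
          (Ici 0)) :=
      hψcont.preimage_isClosed_of_isClosed isClosed_Ici isClosed_Ici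
    have hSC : S ⊆ Ici 0 ∩
        (fun t => min (α * Real.sqrt (2*t) - M) ((α * Real.sqrt (2*t) - M) - u t)) ⁻¹'
          (Ici 0) := by
      intro t ht
      refine ⟨ht.1, ?_⟩
      simp only [mem_preimage, mem_Ici, le_min_iff]
      have hu := unn t ht.1
      constructor
      · linarith [ht.2]
      · linarith [ht.2]
    have hmem := (hC.closure_subset_iff.mpr hSC) hclos
    have ht₀0 : (0:ℝ) ≤ t₀ := hmem.1
    have hmem2 := hmem.2
    simp only [mem_preimage, mem_Ici, le_min_iff] at hmem2
    obtain ⟨hρM', hge⟩ := hmem2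
    set ρ := α * Real.sqrt (2*t₀) with hρdef
    have hρM : M ≤ ρ := by linarith
    have hsq0 : 0 ≤ Real.sqrt (2*t₀) := Real.sqrt_nonneg _
    have hst₀ : 3 ≤ Real.sqrt (2*t₀) := by nlinarith
    have ht₀1 : 1 ≤ t₀ := by
      have h9 : (9:ℝ) ≤ 2*t₀ := by
        have := Real.sq_sqrt (by linarith : (0:ℝ) ≤ 2*t₀)
        nlinarith
      linarith
    have hlt : ∀ t, 0 ≤ t → t < t₀ → α * Real.sqrt (2*t) - M ≤ u t := by
      intro t h0 hltt
      by_contra hc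
      push_neg at hc
      exact absurd (csInf_le hSbd ⟨h0, hc⟩) (not_le.mpr hltt)
    have hle0 : (α * Real.sqrt (2*t₀) - M) - u t₀ ≤ 0 := by
      have hne : (𝓝[Ico 0 t₀] t₀).NeBot := by
        apply mem_closure_iff_nhdsWithin_neBot.mp
        rw [closure_Ico (by linarith : (0:ℝ) ≠ t₀)]
        exact ⟨ht₀0, le_rfl⟩
      have htend : Tendsto (fun t => (α * Real.sqrt (2*t) - M) - u t) (𝓝[Ico 0 t₀] t₀)
          (𝓝 ((α * Real.sqrt (2*t₀) - M) - u t₀)) :=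
        ((hhcont.continuousOn.sub ucont) t₀ ht₀0).mono (fun x hx => hx.1)
      apply le_of_tendsto htend
      filter_upwards [self_mem_nhdsWithin] with t ht
      linarith [hlt t ht.1 ht.2]
    have hueq : α * Real.sqrt (2*t₀) - M = u t₀ := by linarith
    have hIle : ∀ s ∈ Icc (0:ℝ) t₀, α * Real.sqrt (2*s) - M ≤ u s := by
      intro s hs
      rcases lt_or_eq_of_le hs.2 with h | h
      · exact hlt s hs.1 h
      · rw [h, hueq]
    have hρ2 : 2 ≤ ρ := by linarith
    have hρ0 : (0:ℝ) < ρ := by linarith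
    have hJu : Jop (fun s => α * Real.sqrt (2*s) - M) t₀ ≤ Jop u t₀ :=
      Jop_mono ht₀0 hhcont.continuousOn (ucont.mono Icc_subset_Ici_self) hIle hueq
    have hJh : 1/ρ - 4/(3*ρ^2) ≤ Jop (fun s => α * Real.sqrt (2*s) - M) t₀ := by
      rw [Jop_sqrt α M t₀ ht₀0]
      exact Jcalc_lower hρ2
    have hsqpos : 0 < Real.sqrt (2*t₀) := by linarith
    have hd : HasDerivWithinAt (fun t => (α * Real.sqrt (2*t) - M) - u t)
        (α / Real.sqrt (2*t₀) - u' t₀) (Icc 0 t₀) t₀ :=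
      ((sqrtDeriv α M t₀ (by linarith)).hasDerivWithinAt).sub
        ((hderiv t₀ ht₀0).mono Icc_subset_Ici_self)
    have htouch : 0 ≤ α / Real.sqrt (2*t₀) - u' t₀ := by
      apply touch ht₀1 hd
      intro s hs
      have := hIle s hs
      rw [hueq]
      simp only [sub_self]
      linarith
    have hαρ : α / Real.sqrt (2*t₀) = α^2/ρ := by
      rw [hρdef]
      field_simp
    have hkey : 4 < ρ * (3*(1-α^2)) := by
      rw [div_lt_iff₀ (by positivity)] at hM4
      nlinarith
    have hfrac : α^2/ρ < 1/ρ - 4/(3*ρ^2) := by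
      have heq2 : 1/ρ - 4/(3*ρ^2) - α^2/ρ = ((1-α^2)*(3*ρ) - 4)/(3*ρ^2) := by
        field_simp
        ring
      have hpos : 0 < ((1-α^2)*(3*ρ) - 4)/(3*ρ^2) := div_pos (by nlinarith) (by positivity)
      linarith
    have h1 : u' t₀ = Jop u t₀ := heq t₀ ht₀0
    rw [hαρ] at htouch
    linarith
  -- Part 3: conclude the limit
  rw [Metric.tendsto_atTop]
  intro ε hε
  set δ := min (ε/3) (1/2) with hδdef
  have hδ0 : 0 < δ := by
    apply lt_min (by linarith) (by norm_num)
  have hδε : δ ≤ ε/3 := min_le_left _ _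
  have hδ2 : δ ≤ 1/2 := min_le_right _ _
  have hα0 : 0 < 1 - δ := by linarith
  have hα1 : 1 - δ < 1 := by linarith
  obtain ⟨K, hK0, hKle⟩ := hlow (1 - δ) hα0 hα1
  refine ⟨max 1 ((K/δ)^2), ?_⟩
  intro t ht
  have ht1 : (1:ℝ) ≤ t := le_trans (le_max_left _ _) ht
  have ht0 : (0:ℝ) ≤ t := by linarith
  have htK : (K/δ)^2 ≤ t := le_trans (le_max_right _ _) ht
  have hs0 : 0 < Real.sqrt (2*t) := Real.sqrt_pos.mpr (by linarith)
  have hs1 : 1 ≤ Real.sqrt (2*t) := by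
    rw [show (1:ℝ) = Real.sqrt 1 by simp]
    exact Real.sqrt_le_sqrt (by linarith)
  have hsK : K/δ ≤ Real.sqrt (2*t) := by
    have h1 : K/δ = Real.sqrt ((K/δ)^2) := (Real.sqrt_sq (by positivity)).symm
    rw [h1]
    exact Real.sqrt_le_sqrt (by linarith)
  have hKs : K / Real.sqrt (2*t) ≤ δ := by
    rw [div_le_iff₀ hs0]
    calc K = (K/δ) * δ := by field_simp
    _ ≤ δ * Real.sqrt (2*t) := by
        have := mul_le_mul_of_nonneg_right hsK (le_of_lt hδ0)
        linarith [this]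
  have hup : u t / Real.sqrt (2*t) ≤ 1 := by
    rw [div_le_one hs0]
    exact husq t ht0
  have hlo : 1 - 2*δ ≤ u t / Real.sqrt (2*t) := by
    have := hKle t ht0
    have h2 : ((1-δ) * Real.sqrt (2*t) - K) / Real.sqrt (2*t) ≤ u t / Real.sqrt (2*t) := by
      apply div_le_div_of_nonneg_right this hs0.le
    have h3 : ((1-δ) * Real.sqrt (2*t) - K) / Real.sqrt (2*t)
        = (1-δ) - K / Real.sqrt (2*t) := by
      field_simp
    rw [h3] at h2
    linarith
  rw [Real.dist_eq, abs_lt]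
  constructor
  · linarith
  · linarith
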